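/- For every positive integer n not divisible by 3, the congruence n·τ(n) ≡ σ(n) (mod 3) holds in ℤ. -/

import Mathlib

/-- The topology of coefficientwise convergence on `PowerSeries ℤ`
(the product topology, `ℤ` carrying its usual (discrete) topology). -/
noncomputable instance : TopologicalSpace (PowerSeries ℤ) :=
  inferInstanceAs (TopologicalSpace ((Unit →₀ ℕ) → ℤ))

/-- The `q`-expansion of the discriminant modular form:
`Δ = q · ∏_{k=1}^∞ (1 - q^k)^24` in `ℤ⟦q⟧`. -/
noncomputable def Δ : PowerSeries ℤ :=
  PowerSeries.X * ∏' k : ℕ, (1 - PowerSeries.X ^ (k + 1)) ^ 24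

/-- The Ramanujan tau function: the coefficient of `q^n` in `Δ`. -/
noncomputable def ramanujanTau (n : ℕ) : ℤ :=
  PowerSeries.coeff n Δ

noncomputable instance : T2Space (PowerSeries ℤ) :=
  inferInstanceAs (T2Space ((Unit →₀ ℕ) → ℤ))

namespace Ram3

open PowerSeries Finset

/-- triangular numbers -/
def tri : ℕ → ℕ
  | 0 => 0
  | m+1 => tri m + (m+1)

lemma tri_succ (m : ℕ) : tri (m+1) = tri m + (m+1) := rfl

lemma tri_strictMono : StrictMono tri :=
  strictMono_nat_of_lt_succ fun n => by rw [tri_succ]; omega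

lemma self_le_tri (m : ℕ) : m ≤ tri m := by
  induction m with
  | zero => simp [tri]
  | succ k ih => rw [tri_succ]; omega

lemma two_tri (m : ℕ) : 2 * tri m = m * (m+1) := by
  induction m with
  | zero => simp [tri]
  | succ k ih => rw [tri_succ]; ring_nf; ring_nf at ih; omega

section Cong
variable {R : Type*} [CommRing R]

lemma dvd_sub_mul {x A B C D : R} (h1 : x ∣ A - B) (h2 : x ∣ C - D) :
    x ∣ A*C - B*D := by
  have e : A*C - B*D = (A-B)*C + B*(C-D) := by ring
  rw [e]; exact dvd_add (h1.mul_right _) (h2.mul_left _)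

lemma dvd_sub_pow {x A B : R} (h : x ∣ A - B) (s : ℕ) : x ∣ A^s - B^s := by
  induction s with
  | zero => simp
  | succ t ih => rw [pow_succ, pow_succ]; exact dvd_sub_mul ih h
end Cong

lemma coeff_eq_of_dvd {m i : ℕ} {A B : PowerSeries ℤ}
    (h : (X:PowerSeries ℤ)^m ∣ A - B) (hi : i < m) :
    coeff i A = coeff i B := by
  have := PowerSeries.X_pow_dvd_iff.mp h i hi
  rw [map_sub, sub_eq_zero] at this
  exact this

lemma coeff_eq_of_dvd' {m i : ℕ} {R : Type*} [CommRing R] {A B : PowerSeries R}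
    (h : (X:PowerSeries R)^m ∣ A - B) (hi : i < m) :
    coeff i A = coeff i B := by
  have := PowerSeries.X_pow_dvd_iff.mp h i hi
  rw [map_sub, sub_eq_zero] at this
  exact this

/-- the finite products ∏_{j<n} (1 - X^(j+1)) -/
noncomputable def Ff (n : ℕ) : PowerSeries ℤ := ∏ j ∈ range n, (1 - X^(j+1))

lemma constantCoeff_Ff (n : ℕ) : constantCoeff (Ff n) = 1 := by
  unfold Ff
  rw [map_prod]
  apply Finset.prod_eq_one
  intro j _
  rw [map_sub, map_one, map_pow, constantCoeff_X]
  simp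

/-- inverse of Ff -/
noncomputable def Fi (n : ℕ) : PowerSeries ℤ := invOfUnit (Ff n) 1

lemma Ff_mul_Fi (n : ℕ) : Ff n * Fi n = 1 :=
  mul_invOfUnit _ 1 (by rw [constantCoeff_Ff]; rfl)

lemma isUnit_Ff (n : ℕ) : IsUnit (Ff n) := IsUnit.of_mul_eq_one _ (Ff_mul_Fi n)

lemma Ff_add (a b : ℕ) : Ff (a+b) = Ff a * ∏ j ∈ range b, (1 - X^(a+j+1)) := by
  unfold Ff
  rw [Finset.prod_range_add]

lemma Fi_mul_Ff (r r' : ℕ) (h : r ≤ r') :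
    Fi r * Ff r' = ∏ j ∈ range (r'-r), (1 - (X:PowerSeries ℤ)^(r+j+1)) := by
  obtain ⟨t, rfl⟩ := Nat.exists_eq_add_of_le h
  have e : r + t - r = t := by omega
  rw [e, Ff_add, ← mul_assoc, mul_comm (Fi r), Ff_mul_Fi, one_mul]

lemma unit_cancel {A B u : PowerSeries ℤ} (hu : IsUnit u) (h : A*u = B*u) : A = B :=
  hu.mul_right_cancel h

lemma dvd_tail_sub_one (a b m : ℕ) (h : m ≤ a + 1) :
    (X:PowerSeries ℤ)^m ∣ (∏ j ∈ range b, (1 - X^(a+j+1))) - 1 := by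
  induction b with
  | zero => simp
  | succ t ih =>
    rw [prod_range_succ]
    have h2 : (X:PowerSeries ℤ)^m ∣ (1 - X^(a+t+1)) - 1 := by
      simp only [sub_sub_cancel_left, dvd_neg]
      exact pow_dvd_pow _ (by omega)
    have := dvd_sub_mul ih h2
    simpa using this


lemma Fi_mul_Ff_self (r : ℕ) : Fi r * Ff r = 1 := by
  rw [mul_comm]; exact Ff_mul_Fi r

lemma Fi_zero : Fi 0 = 1 := by
  have := Fi_mul_Ff_self 0
  simpa [Ff] using this

lemma Ff_one : Ff 1 = 1 - X := by
  unfold Ff; rw [Finset.prod_range_one]; norm_num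

lemma Fi_mul_Ff_one' (r s : ℕ) (h : s = r+1) : Fi r * Ff s = 1 - X^s := by
  subst h
  rw [Fi_mul_Ff r (r+1) (by omega)]
  have e : r + 1 - r = 1 := by omega
  rw [e, Finset.prod_range_one]

lemma Fi_mul_Ff_two' (r a s : ℕ) (ha : a = r+1) (h : s = r+2) :
    Fi r * Ff s = (1 - X^a) * (1 - X^s) := by
  subst ha h
  rw [Fi_mul_Ff r (r+2) (by omega)]
  have e : r + 2 - r = 2 := by omega
  rw [e, Finset.prod_range_succ, Finset.prod_range_one]

lemma Fi_mul_Ff_three' (r a b s : ℕ) (ha : a = r+1) (hb : b = r+2) (h : s = r+3) :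
    Fi r * Ff s = (1 - X^a) * (1 - X^b) * (1 - X^s) := by
  subst ha hb h
  rw [Fi_mul_Ff r (r+3) (by omega)]
  have e : r + 3 - r = 3 := by omega
  rw [e, Finset.prod_range_succ, Finset.prod_range_succ, Finset.prod_range_one]

lemma Ff_two_more (m a s : ℕ) (ha : a = m+1) (hs : s = m+2) :
    Ff s = Ff m * ((1 - X^a) * (1 - X^s)) := by
  subst ha hs
  rw [Ff_add m 2, Finset.prod_range_succ, Finset.prod_range_one]

/-- q-binomial-type block: Ff m / (Ff r * Ff s)  (used with m = r + s) -/
noncomputable def Bb (m r s : ℕ) : PowerSeries ℤ := Ff m * Fi r * Fi s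

lemma Bb_comm (m r s : ℕ) : Bb m r s = Bb m s r := by unfold Bb; ring

lemma Bb_zero_self (m : ℕ) : Bb m 0 m = 1 := by
  unfold Bb; rw [Fi_zero, mul_one, Ff_mul_Fi]

/-- terms of the finite Jacobi identity -/
noncomputable def Jt (n k : ℕ) : PowerSeries ℤ :=
  (-1)^k * (2*(k:PowerSeries ℤ)+1) * X^(tri k) * Bb (2*n+1) (n-k) (n+k+1)

/-- telescoping certificate -/
noncomputable def Gc (n k : ℕ) : PowerSeries ℤ :=
  (-1)^(k+1) * X^(tri k + (n+1-k)) *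
    ((2*(k:PowerSeries ℤ)+1) * Bb (2*n+1) (n+1-k) (n+k)
      + (2*(k:PowerSeries ℤ)-1) * X^k * Bb (2*n+1) (n-k) (n+k+1))

noncomputable def GTop (n : ℕ) : PowerSeries ℤ :=
  (-1)^n * (2*(n:PowerSeries ℤ)+3) * X^(tri (n+1))

lemma Gc_zero (n : ℕ) : Gc n 0 = 0 := by
  simp only [Gc, Nat.sub_zero, Nat.add_zero, Nat.cast_zero, tri]
  rw [Bb_comm (2*n+1) (n+1) n]
  ring

lemma Jt_top (n : ℕ) : Jt (n+1) (n+1) = -GTop n := by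
  simp only [Jt, GTop]
  have e1 : (n+1) - (n+1) = 0 := by omega
  have e2 : (n+1) + (n+1) + 1 = 2*(n+1)+1 := by omega
  rw [e1, e2, Bb_zero_self]
  push_cast
  ring

lemma cert_main (k d : ℕ) :
    Jt (k+d+2) k - (1 - X^(k+d+2))^2 * Jt (k+d+1) k
      = Gc (k+d+1) (k+1) - Gc (k+d+1) k := by
  apply unit_cancel (u := Ff (d+2) * Ff (2*k+d+4)) ((isUnit_Ff _).mul (isUnit_Ff _))
  have L1 : Jt (k+d+2) k * (Ff (d+2) * Ff (2*k+d+4))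
      = (-1)^k * (2*(k:PowerSeries ℤ)+1) * X^(tri k) *
        (Ff (2*k+2*d+3) * ((1-X^(2*k+2*d+4))*(1-X^(2*k+2*d+5))*(1-X^(2*k+d+4)))) := by
    have i1 : 2*(k+d+2)+1 = 2*k+2*d+5 := by omega
    have i2 : k+d+2 - k = d+2 := by omega
    have i3 : k+d+2+k+1 = 2*k+d+3 := by omega
    calc Jt (k+d+2) k * (Ff (d+2) * Ff (2*k+d+4))
        = (-1)^k * (2*(k:PowerSeries ℤ)+1) * X^(tri k) *
          (Ff (2*k+2*d+5) * ((Fi (d+2) * Ff (d+2)) * (Fi (2*k+d+3) * Ff (2*k+d+4)))) := by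
          simp only [Jt, Bb, i1, i2, i3]; ring
      _ = _ := by
          rw [Fi_mul_Ff_self, Fi_mul_Ff_one' (2*k+d+3) (2*k+d+4) (by omega),
            Ff_two_more (2*k+2*d+3) (2*k+2*d+4) (2*k+2*d+5) (by omega) (by omega)]
          ring
  have L2 : ((1 - X^(k+d+2))^2 * Jt (k+d+1) k) * (Ff (d+2) * Ff (2*k+d+4))
      = (1 - X^(k+d+2))^2 * ((-1)^k * (2*(k:PowerSeries ℤ)+1) * X^(tri k) *
        (Ff (2*k+2*d+3) * ((1-X^(d+2)) * ((1-X^(2*k+d+3))*(1-X^(2*k+d+4)))))) := by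
    have i1 : 2*(k+d+1)+1 = 2*k+2*d+3 := by omega
    have i2 : k+d+1 - k = d+1 := by omega
    have i3 : k+d+1+k+1 = 2*k+d+2 := by omega
    calc ((1 - X^(k+d+2))^2 * Jt (k+d+1) k) * (Ff (d+2) * Ff (2*k+d+4))
        = (1 - X^(k+d+2))^2 * ((-1)^k * (2*(k:PowerSeries ℤ)+1) * X^(tri k) *
          (Ff (2*k+2*d+3) * ((Fi (d+1) * Ff (d+2)) * (Fi (2*k+d+2) * Ff (2*k+d+4))))) := by
          simp only [Jt, Bb, i1, i2, i3]; ring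
      _ = _ := by
          rw [Fi_mul_Ff_one' (d+1) (d+2) (by omega),
            Fi_mul_Ff_two' (2*k+d+2) (2*k+d+3) (2*k+d+4) (by omega) (by omega)]
  have L3 : Gc (k+d+1) k * (Ff (d+2) * Ff (2*k+d+4))
      = (-1)^(k+1) * X^(tri k + (d+2)) *
          ((2*(k:PowerSeries ℤ)+1) * (Ff (2*k+2*d+3) *
              ((1-X^(2*k+d+2))*(1-X^(2*k+d+3))*(1-X^(2*k+d+4))))
            + (2*(k:PowerSeries ℤ)-1) * X^k * (Ff (2*k+2*d+3) *
              ((1-X^(d+2)) * ((1-X^(2*k+d+3))*(1-X^(2*k+d+4)))))) := by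
    have i1 : 2*(k+d+1)+1 = 2*k+2*d+3 := by omega
    have i2 : k+d+1+1 - k = d+2 := by omega
    have i3 : k+d+1+k = 2*k+d+1 := by omega
    have i4 : k+d+1 - k = d+1 := by omega
    have i5 : k+d+1+k+1 = 2*k+d+2 := by omega
    calc Gc (k+d+1) k * (Ff (d+2) * Ff (2*k+d+4))
        = (-1)^(k+1) * X^(tri k + (d+2)) *
          ((2*(k:PowerSeries ℤ)+1) * (Ff (2*k+2*d+3) *
              ((Fi (d+2) * Ff (d+2)) * (Fi (2*k+d+1) * Ff (2*k+d+4))))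
            + (2*(k:PowerSeries ℤ)-1) * X^k * (Ff (2*k+2*d+3) *
              ((Fi (d+1) * Ff (d+2)) * (Fi (2*k+d+2) * Ff (2*k+d+4))))) := by
          simp only [Gc, Bb, i1, i2, i3, i4, i5]; ring
      _ = _ := by
          rw [Fi_mul_Ff_self, Fi_mul_Ff_one' (d+1) (d+2) (by omega),
            Fi_mul_Ff_two' (2*k+d+2) (2*k+d+3) (2*k+d+4) (by omega) (by omega),
            Fi_mul_Ff_three' (2*k+d+1) (2*k+d+2) (2*k+d+3) (2*k+d+4) (by omega) (by omega) (by omega)]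
          ring
  have L4 : Gc (k+d+1) (k+1) * (Ff (d+2) * Ff (2*k+d+4))
      = (-1)^(k+1+1) * X^(tri k + (k+1) + (d+1)) *
          ((2*((k:PowerSeries ℤ)+1)+1) * (Ff (2*k+2*d+3) *
              ((1-X^(d+2)) * ((1-X^(2*k+d+3))*(1-X^(2*k+d+4)))))
            + (2*((k:PowerSeries ℤ)+1)-1) * X^(k+1) * (Ff (2*k+2*d+3) *
              (((1-X^(d+1))*(1-X^(d+2))) * (1-X^(2*k+d+4))))) := by
    have i1 : 2*(k+d+1)+1 = 2*k+2*d+3 := by omega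
    have i2 : k+d+1+1 - (k+1) = d+1 := by omega
    have i3 : k+d+1+(k+1) = 2*k+d+2 := by omega
    have i4 : k+d+1 - (k+1) = d := by omega
    have i5 : k+d+1+(k+1)+1 = 2*k+d+3 := by omega
    calc Gc (k+d+1) (k+1) * (Ff (d+2) * Ff (2*k+d+4))
        = (-1)^(k+1+1) * X^(tri (k+1) + (d+1)) *
          ((2*(((k+1):ℕ):PowerSeries ℤ)+1) * (Ff (2*k+2*d+3) *
              ((Fi (d+1) * Ff (d+2)) * (Fi (2*k+d+2) * Ff (2*k+d+4))))
            + (2*(((k+1):ℕ):PowerSeries ℤ)-1) * X^(k+1) * (Ff (2*k+2*d+3) *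
              ((Fi d * Ff (d+2)) * (Fi (2*k+d+3) * Ff (2*k+d+4))))) := by
          simp only [Gc, Bb, i1, i2, i3, i4, i5]; ring
      _ = _ := by
          rw [Fi_mul_Ff_one' (d+1) (d+2) (by omega),
            Fi_mul_Ff_one' (2*k+d+3) (2*k+d+4) (by omega),
            Fi_mul_Ff_two' d (d+1) (d+2) (by omega) (by omega),
            Fi_mul_Ff_two' (2*k+d+2) (2*k+d+3) (2*k+d+4) (by omega) (by omega),
            tri_succ]
          push_cast
          ring
  rw [sub_mul, sub_mul, L1, L2, L3, L4]
  push_cast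
  ring

lemma cert_top (n : ℕ) :
    Jt (n+1) n - (1 - X^(n+1))^2 * Jt n n = GTop n - Gc n n := by
  apply unit_cancel (u := Ff 1 * Ff (2*n+3)) ((isUnit_Ff _).mul (isUnit_Ff _))
  have M1 : Jt (n+1) n * (Ff 1 * Ff (2*n+3))
      = (-1)^n * (2*(n:PowerSeries ℤ)+1) * X^(tri n) *
        (Ff (2*n+1) * ((1-X^(2*n+2))*(1-X^(2*n+3))) * (1 - X^(2*n+3))) := by
    have i1 : 2*(n+1)+1 = 2*n+3 := by omega
    have i2 : n+1-n = 1 := by omega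
    have i3 : n+1+n+1 = 2*n+2 := by omega
    calc Jt (n+1) n * (Ff 1 * Ff (2*n+3))
        = (-1)^n * (2*(n:PowerSeries ℤ)+1) * X^(tri n) *
          (Ff (2*n+3) * ((Fi 1 * Ff 1) * (Fi (2*n+2) * Ff (2*n+3)))) := by
          simp only [Jt, Bb, i1, i2, i3]; ring
      _ = _ := by
          rw [Fi_mul_Ff_self, Fi_mul_Ff_one' (2*n+2) (2*n+3) (by omega),
            Ff_two_more (2*n+1) (2*n+2) (2*n+3) (by omega) (by omega)]
          ring
  have M2 : ((1 - X^(n+1))^2 * Jt n n) * (Ff 1 * Ff (2*n+3))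
      = (1 - X^(n+1))^2 * ((-1)^n * (2*(n:PowerSeries ℤ)+1) * X^(tri n) *
        (Ff (2*n+1) * ((1-X^(2*n+2))*(1-X^(2*n+3))) * Ff 1)) := by
    have i2 : n-n = 0 := by omega
    have i3 : n+n+1 = 2*n+1 := by omega
    calc ((1 - X^(n+1))^2 * Jt n n) * (Ff 1 * Ff (2*n+3))
        = (1 - X^(n+1))^2 * ((-1)^n * (2*(n:PowerSeries ℤ)+1) * X^(tri n) *
          (Ff (2*n+1) * Fi 0 * (Fi (2*n+1) * Ff (2*n+3)) * Ff 1)) := by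
          simp only [Jt, Bb, i2, i3]; ring
      _ = _ := by
          rw [Fi_zero, Fi_mul_Ff_two' (2*n+1) (2*n+2) (2*n+3) (by omega) (by omega)]
          ring
  have M3 : GTop n * (Ff 1 * Ff (2*n+3))
      = (-1)^n * (2*(n:PowerSeries ℤ)+3) * X^(tri n + (n+1)) *
        (Ff 1 * (Ff (2*n+1) * ((1-X^(2*n+2))*(1-X^(2*n+3))))) := by
    simp only [GTop, tri_succ]
    rw [← Ff_two_more (2*n+1) (2*n+2) (2*n+3) (by omega) (by omega)]
    try ring
  have M4 : Gc n n * (Ff 1 * Ff (2*n+3))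
      = (-1)^(n+1) * X^(tri n + 1) *
          ((2*(n:PowerSeries ℤ)+1) * (Ff (2*n+1) *
              ((1-X^(2*n+1))*(1-X^(2*n+2))*(1-X^(2*n+3))))
            + (2*(n:PowerSeries ℤ)-1) * X^n * (Ff (2*n+1) *
              ((1-X^(2*n+2))*(1-X^(2*n+3))) * Ff 1)) := by
    have i2 : n+1-n = 1 := by omega
    have i3 : n+n = 2*n := by omega
    have i4 : n-n = 0 := by omega
    have i5 : n+n+1 = 2*n+1 := by omega
    calc Gc n n * (Ff 1 * Ff (2*n+3))
        = (-1)^(n+1) * X^(tri n + 1) *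
          ((2*(n:PowerSeries ℤ)+1) * (Ff (2*n+1) *
              ((Fi 1 * Ff 1) * (Fi (2*n) * Ff (2*n+3))))
            + (2*(n:PowerSeries ℤ)-1) * X^n * (Ff (2*n+1) * Fi 0 *
              (Fi (2*n+1) * Ff (2*n+3)) * Ff 1)) := by
          simp only [Gc, Bb, i2, i3, i4, i5]; ring
      _ = _ := by
          rw [Fi_zero, Fi_mul_Ff_self,
            Fi_mul_Ff_two' (2*n+1) (2*n+2) (2*n+3) (by omega) (by omega),
            Fi_mul_Ff_three' (2*n) (2*n+1) (2*n+2) (2*n+3) (by omega) (by omega) (by omega)]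
          ring
  rw [sub_mul, sub_mul, M1, M2, M3, M4, Ff_one]
  ring

lemma Ff_succ (n : ℕ) : Ff (n+1) = Ff n * (1 - X^(n+1)) := by
  unfold Ff; rw [Finset.prod_range_succ]

/-- The finite Jacobi triple product cube identity. -/
lemma finJacobi (n : ℕ) : ∑ k ∈ range (n+1), Jt n k = Ff n ^ 2 := by
  induction n with
  | zero =>
    rw [Finset.sum_range_one]
    show Jt 0 0 = Ff 0 ^ 2
    simp only [Jt, tri, Bb]
    norm_num
    rw [Fi_zero, mul_one, Ff_mul_Fi]
    simp [Ff]
  | succ n ih =>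
    have tele : ∑ k ∈ range (n+1), (Jt (n+1) k - (1 - X^(n+1))^2 * Jt n k)
        = GTop n := by
      rw [Finset.sum_range_succ]
      have base : ∑ k ∈ range n, (Jt (n+1) k - (1 - X^(n+1))^2 * Jt n k)
          = ∑ k ∈ range n, (Gc n (k+1) - Gc n k) := by
        apply Finset.sum_congr rfl
        intro k hk
        rw [Finset.mem_range] at hk
        obtain ⟨d, rfl⟩ : ∃ d, n = k + d + 1 := ⟨n - k - 1, by omega⟩
        exact cert_main k d
      rw [base, Finset.sum_range_sub (fun k => Gc n k), cert_top, Gc_zero]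
      ring
    have expand : ∑ k ∈ range (n+1+1), Jt (n+1) k
        = ∑ k ∈ range (n+1), Jt (n+1) k + Jt (n+1) (n+1) := Finset.sum_range_succ _ _
    have sums : ∑ k ∈ range (n+1), Jt (n+1) k
        = (1 - X^(n+1))^2 * ∑ k ∈ range (n+1), Jt n k + GTop n := by
      have := tele
      rw [Finset.sum_sub_distrib, ← Finset.mul_sum] at this
      linear_combination this
    rw [expand, sums, ih, Jt_top, Ff_succ]
    ring

end Ram3

namespace Ram3
open PowerSeries Finset
open scoped Classical

/-- the Euler product P = ∏ (1 - X^(k+1)) as a power series (coefficientwise limit) -/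
noncomputable def P : PowerSeries ℤ := mk fun n => coeff n (Ff n)

lemma dvd_Ff_sub_Ff {n N : ℕ} (h : n ≤ N) : (X:PowerSeries ℤ)^(n+1) ∣ Ff N - Ff n := by
  obtain ⟨t, rfl⟩ := Nat.exists_eq_add_of_le h
  rw [Ff_add]
  have : Ff n * ∏ j ∈ range t, (1 - (X:PowerSeries ℤ)^(n+j+1)) - Ff n
      = Ff n * ((∏ j ∈ range t, (1 - (X:PowerSeries ℤ)^(n+j+1))) - 1) := by ring
  rw [this]
  exact Dvd.dvd.mul_left (dvd_tail_sub_one n t (n+1) (by omega)) _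

lemma coeff_Ff_stab {n N : ℕ} (h : n ≤ N) : coeff n (Ff N) = coeff n (Ff n) :=
  coeff_eq_of_dvd (dvd_Ff_sub_Ff h) (by omega)

lemma coeff_P (n : ℕ) : coeff n P = coeff n (Ff n) := coeff_mk _ _

lemma dvd_P_sub_Ff (n : ℕ) : (X:PowerSeries ℤ)^(n+1) ∣ P - Ff n := by
  rw [PowerSeries.X_pow_dvd_iff]
  intro i hi
  rw [map_sub, coeff_P, coeff_Ff_stab (show i ≤ n by omega), sub_self]

lemma tri_inj : Function.Injective tri := tri_strictMono.injective

/-- coefficients of the Jacobi cube series -/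
noncomputable def jc (n : ℕ) : ℤ :=
  if h : ∃ m, tri m = n then (-1)^(h.choose) * (2*(h.choose : ℤ)+1) else 0

lemma jc_tri (m : ℕ) : jc (tri m) = (-1)^m * (2*(m:ℤ)+1) := by
  have h : ∃ m', tri m' = tri m := ⟨m, rfl⟩
  rw [jc, dif_pos h]
  have := tri_inj h.choose_spec
  rw [this]

lemma jc_of_not_tri {n : ℕ} (h : ∀ m, tri m ≠ n) : jc n = 0 := by
  rw [jc, dif_neg]; push_neg; exact h

/-- the Jacobi cube series -/
noncomputable def J : PowerSeries ℤ := mk jc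

lemma coeff_jacobi_term (i k : ℕ) :
    coeff i ((-1)^k * (2*(k:PowerSeries ℤ)+1) * X^(tri k))
      = if i = tri k then (-1)^k * (2*(k:ℤ)+1) else 0 := by
  have e : ((-1)^k * (2*(k:PowerSeries ℤ)+1) * X^(tri k) : PowerSeries ℤ)
      = C ((-1)^k * (2*(k:ℤ)+1)) * X^(tri k) := by
    rw [eq_intCast C]
    push_cast
    ring
  rw [e, PowerSeries.coeff_C_mul, PowerSeries.coeff_X_pow]
  split_ifs with h
  · rw [mul_one]
  · rw [mul_zero]

lemma dvd_J_sub_partial (n : ℕ) :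
    (X:PowerSeries ℤ)^(n+1) ∣ J - ∑ k ∈ range (n+1), (-1)^k * (2*(k:PowerSeries ℤ)+1) * X^(tri k) := by
  rw [PowerSeries.X_pow_dvd_iff]
  intro i hi
  rw [map_sub, sub_eq_zero]
  simp only [J, coeff_mk]
  rw [map_sum]
  simp only [coeff_jacobi_term]
  by_cases h : ∃ m, tri m = i
  · obtain ⟨m, rfl⟩ := h
    rw [Finset.sum_eq_single m]
    · rw [if_pos rfl, jc_tri]
    · intro b _ hb
      rw [if_neg]; intro e; exact hb (tri_inj e.symm)
    · intro hm
      exfalso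
      rw [Finset.mem_range] at hm
      have := self_le_tri m
      omega
  · push_neg at h
    rw [jc_of_not_tri fun m => h m, Finset.sum_eq_zero]
    intro k _
    rw [if_neg]
    intro e; exact h k e.symm

lemma dvd_inv_sub_one {u v : PowerSeries ℤ} {m : ℕ} (huv : u * v = 1)
    (h : (X:PowerSeries ℤ)^m ∣ u - 1) : (X:PowerSeries ℤ)^m ∣ v - 1 := by
  have : v - 1 = -(v * (u - 1)) := by
    have : v * u = 1 := by rw [mul_comm]; exact huv
    calc v - 1 = v * 1 - v * u := by rw [this, mul_one]
    _ = -(v * (u-1)) := by ring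
  rw [this]
  exact dvd_neg.mpr (h.mul_left v)

lemma dvd_Bb_mul_Ff (n k : ℕ) (hk : k ≤ n) :
    (X:PowerSeries ℤ)^(n-k+1) ∣ Bb (2*n+1) (n-k) (n+k+1) * Ff n - 1 := by
  set m := n - k + 1 with hm
  have hA : (X:PowerSeries ℤ)^m ∣ Fi (n-k) * Ff (2*n+1) - 1 := by
    rw [Fi_mul_Ff (n-k) (2*n+1) (by omega)]
    exact dvd_tail_sub_one (n-k) _ m (by omega)
  have hB : (X:PowerSeries ℤ)^m ∣ Fi (n+k+1) * Ff n - 1 := by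
    have huv : (Fi (n+k+1) * Ff n) * (∏ j ∈ range (k+1), (1 - (X:PowerSeries ℤ)^(n+j+1))) = 1 := by
      rw [mul_assoc, ← Ff_add n (k+1)]
      have e : n + (k+1) = n + k + 1 := by omega
      rw [e, mul_comm]
      exact Ff_mul_Fi _
    have htail : (X:PowerSeries ℤ)^m ∣ (∏ j ∈ range (k+1), (1 - (X:PowerSeries ℤ)^(n+j+1))) - 1 :=
      dvd_tail_sub_one n _ m (by omega)
    exact dvd_inv_sub_one (by rw [mul_comm]; exact huv) htail
  have e : Bb (2*n+1) (n-k) (n+k+1) * Ff n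
      = (Fi (n-k) * Ff (2*n+1)) * (Fi (n+k+1) * Ff n) := by
    unfold Bb; ring
  rw [e]
  have := dvd_sub_mul hA hB
  simpa using this

/-- Jacobi's identity: the cube of the Euler product. -/
lemma jacobi : P^3 = J := by
  ext n
  have h1 : (X:PowerSeries ℤ)^(n+1) ∣ P^3 - Ff n ^ 3 := dvd_sub_pow (dvd_P_sub_Ff n) 3
  have h2 : Ff n ^ 3 = (∑ k ∈ range (n+1), Jt n k) * Ff n := by
    rw [finJacobi]; ring
  have h3 : (X:PowerSeries ℤ)^(n+1) ∣ (∑ k ∈ range (n+1), Jt n k) * Ff n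
      - ∑ k ∈ range (n+1), (-1)^k * (2*(k:PowerSeries ℤ)+1) * X^(tri k) := by
    rw [Finset.sum_mul, ← Finset.sum_sub_distrib]
    apply Finset.dvd_sum
    intro k hk
    rw [Finset.mem_range] at hk
    have hkn : k ≤ n := by omega
    have : Jt n k * Ff n - (-1)^k * (2*(k:PowerSeries ℤ)+1) * X^(tri k)
        = ((-1)^k * (2*(k:PowerSeries ℤ)+1) * X^(tri k)) *
          (Bb (2*n+1) (n-k) (n+k+1) * Ff n - 1) := by
      unfold Jt; ring
    rw [this]
    have hdvd := dvd_Bb_mul_Ff n k hkn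
    have step1 : (X:PowerSeries ℤ)^(n+1) ∣ X^(tri k + (n-k+1)) :=
      pow_dvd_pow X (by have := self_le_tri k; omega)
    apply dvd_trans step1
    rw [pow_add]
    have step2 : (X:PowerSeries ℤ)^(tri k) * X^(n-k+1)
        ∣ X^(tri k) * (Bb (2*n+1) (n-k) (n+k+1) * Ff n - 1) :=
      mul_dvd_mul_left _ hdvd
    apply dvd_trans step2
    have e2 : (-1)^k*(2*(k:PowerSeries ℤ)+1)*X^(tri k) * (Bb (2*n+1) (n-k) (n+k+1) * Ff n - 1)
        = ((-1)^k*(2*(k:PowerSeries ℤ)+1)) * (X^(tri k) * (Bb (2*n+1) (n-k) (n+k+1) * Ff n - 1)) := by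
      ring
    rw [e2]
    exact dvd_mul_left _ _
  calc coeff n (P^3) = coeff n (Ff n ^ 3) := coeff_eq_of_dvd h1 (by omega)
  _ = coeff n ((∑ k ∈ range (n+1), Jt n k) * Ff n) := by rw [h2]
  _ = coeff n (∑ k ∈ range (n+1), (-1)^k * (2*(k:PowerSeries ℤ)+1) * X^(tri k)) :=
      coeff_eq_of_dvd h3 (by omega)
  _ = coeff n J := (coeff_eq_of_dvd (dvd_J_sub_partial n) (by omega)).symm


/-- θ = q d/dq -/
noncomputable def th (f : PowerSeries ℤ) : PowerSeries ℤ := X * derivativeFun f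

lemma coeff_th (n : ℕ) (f : PowerSeries ℤ) :
    coeff n (th f) = (n : ℤ) * coeff n f := by
  unfold th
  cases n with
  | zero =>
    rw [coeff_zero_eq_constantCoeff, map_mul, constantCoeff_X, zero_mul]
    push_cast; ring
  | succ m =>
    rw [coeff_succ_X_mul, show derivativeFun f = derivative _ f from rfl, coeff_derivative]
    push_cast; ring

lemma th_mul (f g : PowerSeries ℤ) : th (f * g) = f * th g + g * th f := by
  unfold th
  rw [derivativeFun_mul]
  rw [smul_eq_mul, smul_eq_mul]
  ring

lemma dvd_th {m : ℕ} {A B : PowerSeries ℤ} (h : (X:PowerSeries ℤ)^m ∣ A - B) :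
    (X:PowerSeries ℤ)^m ∣ th A - th B := by
  rw [PowerSeries.X_pow_dvd_iff] at h ⊢
  intro i hi
  rw [map_sub, coeff_th, coeff_th, ← mul_sub]
  have := h i hi
  rw [map_sub, sub_eq_zero] at this
  rw [this]; ring

/-- geometric series for X^d -/
noncomputable def geo (d : ℕ) : PowerSeries ℤ := mk fun n => if d ∣ n then 1 else 0

lemma coeff_geo (d m : ℕ) : coeff m (geo d) = if d ∣ m then 1 else 0 := coeff_mk _ _

lemma onem_mul_geo (d : ℕ) (hd : 1 ≤ d) : (1 - X^d) * geo d = 1 := by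
  ext n
  rw [sub_mul, one_mul, map_sub, coeff_one, PowerSeries.coeff_X_pow_mul', coeff_geo]
  by_cases hn : n = 0
  · subst hn
    rw [if_pos (dvd_zero d), if_neg (show ¬ d ≤ 0 by omega), if_pos rfl]
    ring
  · rw [if_neg hn]
    by_cases h1 : d ∣ n
    · have hdn : d ≤ n := Nat.le_of_dvd (by omega) h1
      rw [if_pos h1, if_pos hdn, coeff_geo, if_pos (Nat.dvd_sub h1 dvd_rfl)]
      ring
    · rw [if_neg h1]
      by_cases h2 : d ≤ n
      · rw [if_pos h2, coeff_geo, if_neg]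
        · ring
        · intro h3
          have : d ∣ (n - d) + d := Dvd.dvd.add h3 dvd_rfl
          rw [Nat.sub_add_cancel h2] at this
          exact h1 this
      · rw [if_neg h2]
        ring

lemma th_onem (d : ℕ) : th (1 - X^d) = -((d:PowerSeries ℤ) * X^d) := by
  ext n
  rw [coeff_th, map_sub, map_neg]
  have hc : (coeff n) ((d:PowerSeries ℤ) * X ^ d) = (d:ℤ) * (if n = d then 1 else 0) := by
    have e : ((d:ℕ) : PowerSeries ℤ) = C (d:ℤ) := by
      rw [eq_intCast C]; push_cast; ring
    rw [e, PowerSeries.coeff_C_mul, PowerSeries.coeff_X_pow]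
  rw [hc, coeff_one, PowerSeries.coeff_X_pow]
  split_ifs with h1 h2 h2 <;> push_cast <;> omega

/-- partial sigma series -/
noncomputable def Sfin (N : ℕ) : PowerSeries ℤ :=
  ∑ k ∈ range N, (((k+1:ℕ)):PowerSeries ℤ) * X^(k+1) * geo (k+1)

lemma th_Ff (N : ℕ) : th (Ff N) = -(Sfin N * Ff N) := by
  induction N with
  | zero =>
    show th (Ff 0) = _
    have h0 : Ff 0 = 1 := by simp [Ff]
    have hS : Sfin 0 = 0 := by simp [Sfin]
    rw [h0, hS, th]
    rw [derivativeFun_one]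
    ring
  | succ N ih =>
    rw [Ff_succ, th_mul, ih, th_onem]
    have hg := onem_mul_geo (N+1) (by omega)
    have hSfin : Sfin (N+1) = Sfin N + (((N+1:ℕ)):PowerSeries ℤ) * X^(N+1) * geo (N+1) := by
      unfold Sfin; rw [Finset.sum_range_succ]
    rw [hSfin]
    push_cast
    linear_combination (((N:PowerSeries ℤ)+1) * X^(N+1) * Ff N) * hg

/-- the sigma power series -/
noncomputable def S : PowerSeries ℤ := mk fun n => ((ArithmeticFunction.sigma 1 n : ℕ) : ℤ)

lemma coeff_Sfin (N i : ℕ) (hi : i ≤ N) :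
    coeff i (Sfin N) = ((ArithmeticFunction.sigma 1 i : ℕ) : ℤ) := by
  unfold Sfin
  rw [map_sum]
  have hterm : ∀ k, coeff i ((((k+1:ℕ)):PowerSeries ℤ) * X^(k+1) * geo (k+1))
      = if (k+1) ∈ i.divisors then ((k+1:ℕ):ℤ) else 0 := by
    intro k
    have e : ((((k+1):ℕ)):PowerSeries ℤ) * X^(k+1) * geo (k+1)
        = C ((k+1:ℕ):ℤ) * (X^(k+1) * geo (k+1)) := by
      rw [eq_intCast C]; push_cast; ring
    rw [e, PowerSeries.coeff_C_mul, PowerSeries.coeff_X_pow_mul']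
    rcases Nat.eq_zero_or_pos i with rfl | hipos
    · rw [if_neg (show ¬ k+1 ≤ 0 by omega),
        if_neg (show ¬ (k+1) ∈ Nat.divisors 0 by simp [Nat.mem_divisors])]
      ring
    · by_cases h1 : (k+1) ∣ i
      · have hle : k+1 ≤ i := Nat.le_of_dvd hipos h1
        rw [if_pos hle, coeff_geo, if_pos (Nat.dvd_sub h1 dvd_rfl),
          if_pos (Nat.mem_divisors.mpr ⟨h1, by omega⟩)]
        ring
      · rw [if_neg (show ¬ (k+1) ∈ i.divisors by rw [Nat.mem_divisors]; tauto)]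
        by_cases h2 : k+1 ≤ i
        · rw [if_pos h2, coeff_geo, if_neg]
          · ring
          · intro h3
            have : (k+1) ∣ (i - (k+1)) + (k+1) := Dvd.dvd.add h3 dvd_rfl
            rw [Nat.sub_add_cancel h2] at this
            exact h1 this
        · rw [if_neg h2]
          ring
  simp only [hterm]
  have hinj : ∀ a ∈ range N, ∀ b ∈ range N, a + 1 = b + 1 → a = b := by
    intro a _ b _ h; omega
  calc ∑ k ∈ range N, (if (k+1) ∈ i.divisors then ((k+1:ℕ):ℤ) else 0)
      = ∑ d ∈ (range N).image (· + 1), (if d ∈ i.divisors then (d:ℤ) else 0) := by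
        rw [Finset.sum_image hinj]
    _ = ∑ d ∈ ((range N).image (· + 1)) ∩ i.divisors, (d:ℤ) := Finset.sum_ite_mem _ _ _
    _ = ∑ d ∈ i.divisors, (d:ℤ) := by
        congr 1
        apply Finset.inter_eq_right.mpr
        intro d hd
        rw [Nat.mem_divisors] at hd
        have h1 : 1 ≤ d := Nat.one_le_iff_ne_zero.mpr (by rintro rfl; exact hd.2 (Nat.eq_zero_of_zero_dvd hd.1))
        have h2 : d ≤ i := Nat.le_of_dvd (by omega) hd.1
        rw [Finset.mem_image]
        exact ⟨d - 1, by rw [Finset.mem_range]; omega, by omega⟩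
    _ = ((ArithmeticFunction.sigma 1 i : ℕ) : ℤ) := by
        rw [ArithmeticFunction.sigma_one_apply]
        push_cast
        rfl

lemma dvd_S_sub_Sfin (N : ℕ) : (X:PowerSeries ℤ)^(N+1) ∣ S - Sfin N := by
  rw [PowerSeries.X_pow_dvd_iff]
  intro i hi
  rw [map_sub, sub_eq_zero]
  simp only [S, coeff_mk]
  rw [coeff_Sfin N i (by omega)]

/-- the logarithmic-derivative identity. -/
lemma th_P : th P = -(S * P) := by
  ext n
  have h1 : (X:PowerSeries ℤ)^(n+1) ∣ th P - th (Ff n) := dvd_th (dvd_P_sub_Ff n)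
  have h2 : (X:PowerSeries ℤ)^(n+1) ∣ S * P - Sfin n * Ff n :=
    dvd_sub_mul (dvd_S_sub_Sfin n) (dvd_P_sub_Ff n)
  have h3 : (X:PowerSeries ℤ)^(n+1) ∣ th P - -(S * P) := by
    have := dvd_sub h1 (dvd_neg.mpr h2)
    rw [th_Ff] at this
    convert this using 1
    ring
  have := PowerSeries.X_pow_dvd_iff.mp h3 n (by omega)
  rw [map_sub, sub_eq_zero] at this
  exact this


lemma dvd_P_sub_Ff' {n N : ℕ} (h : n ≤ N) : (X:PowerSeries ℤ)^(n+1) ∣ P - Ff N := by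
  rw [PowerSeries.X_pow_dvd_iff]
  intro i hi
  rw [map_sub, coeff_P, coeff_Ff_stab (show i ≤ N by omega), coeff_Ff_stab (show i ≤ i from le_rfl), sub_self]

lemma dvd_finprod_sub_one {m : ℕ} (t : Finset ℕ) (g : ℕ → PowerSeries ℤ)
    (h : ∀ k ∈ t, (X:PowerSeries ℤ)^m ∣ g k - 1) :
    (X:PowerSeries ℤ)^m ∣ (∏ k ∈ t, g k) - 1 := by
  induction t using Finset.cons_induction with
  | empty => simp
  | cons a u ha ih =>
    rw [Finset.prod_cons]
    have h1 := h a (Finset.mem_cons_self a u)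
    have h2 := ih (fun k hk => h k (Finset.mem_cons_of_mem hk))
    have := dvd_sub_mul h1 h2
    simpa using this

lemma coeff_prod_stab (n : ℕ) (s : Finset ℕ) (hs : range (n+1) ⊆ s) :
    coeff n (∏ k ∈ s, (1 - (X:PowerSeries ℤ)^(k+1))^24) = coeff n (P^24) := by
  have hsplit : (∏ k ∈ s \ range (n+1), (1 - (X:PowerSeries ℤ)^(k+1))^24) *
      (∏ k ∈ range (n+1), (1 - (X:PowerSeries ℤ)^(k+1))^24)
      = ∏ k ∈ s, (1 - (X:PowerSeries ℤ)^(k+1))^24 := Finset.prod_sdiff hs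
  have htail : (X:PowerSeries ℤ)^(n+1) ∣
      (∏ k ∈ s \ range (n+1), (1 - (X:PowerSeries ℤ)^(k+1))^24) - 1 := by
    apply dvd_finprod_sub_one
    intro k hk
    rw [Finset.mem_sdiff, Finset.mem_range] at hk
    have hk1 : n + 1 ≤ k + 1 := by omega
    have : (X:PowerSeries ℤ)^(n+1) ∣ (1 - (X:PowerSeries ℤ)^(k+1)) - 1 := by
      simp only [sub_sub_cancel_left, dvd_neg]
      exact pow_dvd_pow _ hk1
    simpa using dvd_sub_pow this 24
  have hbase : (∏ k ∈ range (n+1), (1 - (X:PowerSeries ℤ)^(k+1))^24) = Ff (n+1) ^ 24 := by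
    unfold Ff
    rw [← Finset.prod_pow]
  have h1 : (X:PowerSeries ℤ)^(n+1) ∣ (∏ k ∈ s, (1 - (X:PowerSeries ℤ)^(k+1))^24) - P^24 := by
    rw [← hsplit, hbase]
    have hP : (X:PowerSeries ℤ)^(n+1) ∣ Ff (n+1)^24 - P^24 := by
      have := dvd_sub_pow (x := (X:PowerSeries ℤ)^(n+1)) (A := Ff (n+1)) (B := P) ?_ 24
      · exact this
      · have := dvd_P_sub_Ff' (show n ≤ n+1 by omega)
        have e : Ff (n+1) - P = -(P - Ff (n+1)) := by ring
        rw [e]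
        exact dvd_neg.mpr this
    calc (X:PowerSeries ℤ)^(n+1) ∣
        (((∏ k ∈ s \ range (n+1), (1 - (X:PowerSeries ℤ)^(k+1))^24) - 1) * Ff (n+1)^24)
          + (Ff (n+1)^24 - P^24) := dvd_add (htail.mul_right _) hP
      _ = (∏ k ∈ s \ range (n+1), (1 - (X:PowerSeries ℤ)^(k+1))^24) * Ff (n+1)^24 - P^24 := by
          ring
  exact coeff_eq_of_dvd h1 (by omega)

lemma hasProd24 : HasProd (fun k : ℕ => (1 - (X:PowerSeries ℤ)^(k+1))^24) (P^24) := by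
  rw [HasProd]
  apply tendsto_pi_nhds.mpr
  intro d
  have hd : d = Finsupp.single () (d ()) := by
    have := Finsupp.unique_single d
    simpa using this
  rw [hd]
  generalize d () = n
  apply tendsto_nhds_of_eventually_eq
  rw [SummationFilter.unconditional_filter, Filter.eventually_atTop]
  refine ⟨range (n+1), fun s hs => ?_⟩
  show coeff n (∏ k ∈ s, (1 - (X:PowerSeries ℤ)^(k+1))^24) = coeff n (P^24)
  exact coeff_prod_stab n s hs

lemma delta_eq : Δ = X * P^24 := by
  unfold Δ
  rw [hasProd24.tprod_eq]


/-! ### Frobenius cube over ZMod 3 -/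

abbrev R3 := ZMod 3

lemma three_eq_zero : (3 : PowerSeries R3) = 0 := by
  have h1 : (3 : PowerSeries R3) = C ((3:ℕ):R3) := (map_natCast C 3).symm
  rw [h1, show ((3:ℕ):R3) = 0 by decide, map_zero]

lemma cube_coeff (F : PowerSeries R3) (n : ℕ) :
    coeff n (F^3) = if 3 ∣ n then coeff (n/3) F else 0 := by
  haveI : Fact (Nat.Prime 3) := ⟨by norm_num⟩
  set A : Polynomial R3 := trunc (n+1) F with hA
  have hH : (X:PowerSeries R3)^(n+1) ∣ F - (A : PowerSeries R3) := by
    rw [PowerSeries.X_pow_dvd_iff]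
    intro i hi
    rw [map_sub, Polynomial.coeff_coe, hA, coeff_trunc, if_pos hi, sub_self]
  have hcube : F^3 = (A:PowerSeries R3)^3 + (F - (A:PowerSeries R3))^3 := by
    have e : F^3 - (A:PowerSeries R3)^3 - (F - (A:PowerSeries R3))^3
        = 3 * ((F - (A:PowerSeries R3)) * F * (A:PowerSeries R3)) := by ring
    have e2 : F^3 - (A:PowerSeries R3)^3 - (F - (A:PowerSeries R3))^3 = 0 := by
      rw [e, three_eq_zero]; ring
    linear_combination e2
  have hlow : coeff n ((F - (A:PowerSeries R3))^3) = 0 := by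
    have hd : (X:PowerSeries R3)^(n+1) ∣ (F - (A:PowerSeries R3))^3 :=
      dvd_trans hH (dvd_pow_self _ (by norm_num))
    exact PowerSeries.X_pow_dvd_iff.mp hd n (by omega)
  have hexp : Polynomial.expand R3 3 A = A^3 := by
    have := Polynomial.map_frobenius_expand 3 A
    rwa [ZMod.frobenius_zmod, Polynomial.map_id] at this
  have hc3 : coeff n ((A:PowerSeries R3)^3) = if 3 ∣ n then coeff (n/3) F else 0 := by
    rw [← Polynomial.coe_pow, Polynomial.coeff_coe, ← hexp, Polynomial.coeff_expand (by norm_num)]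
    by_cases h : 3 ∣ n
    · rw [if_pos h, if_pos h, hA, coeff_trunc, if_pos (by have := Nat.div_le_self n 3; omega)]
    · rw [if_neg h, if_neg h]
  rw [hcube, map_add, hlow, add_zero, hc3]

lemma ninth_coeff (G : PowerSeries R3) (n : ℕ) :
    coeff n ((G^3)^3) = if 9 ∣ n then coeff (n/9) G else 0 := by
  rw [cube_coeff, cube_coeff]
  by_cases h9 : 9 ∣ n
  · rw [if_pos (by omega : 3 ∣ n), if_pos (by omega : 3 ∣ n/3), if_pos h9,
      Nat.div_div_eq_div_mul]
  · by_cases h3 : 3 ∣ n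
    · rw [if_pos h3, if_neg (by omega : ¬ 3 ∣ n/3), if_neg h9]
    · rw [if_neg h3, if_neg h9]

/-! ### integral θ identities -/

lemma th_J : th J = -(3*(S*J)) := by
  have h2 := th_mul P P
  have h1 := th_mul P (P*P)
  have e : P^3 = P*(P*P) := by ring
  have hP3 : th (P^3) = 3*(P^2 * th P) := by
    rw [e, h1, h2]; ring
  rw [← jacobi, hP3, th_P]
  ring

lemma hdvd3 (n : ℕ) : (3:ℤ) ∣ (n:ℤ) * jc n := by
  by_cases h : ∃ m, tri m = n
  · obtain ⟨m, rfl⟩ := h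
    rcases (by omega : m % 3 = 0 ∨ m % 3 = 1 ∨ m % 3 = 2) with hm | hm | hm
    · obtain ⟨a, ha⟩ : ∃ a, m = 3*a := ⟨m/3, by omega⟩
      have h1 : m*(m+1) = 3*(a*(m+1)) := by rw [ha]; ring
      have h2 := two_tri m
      have h3 : 3 ∣ tri m := by omega
      have h4 : (3:ℤ) ∣ ((tri m : ℕ) : ℤ) := Int.natCast_dvd_natCast.mpr h3
      exact h4.mul_right _
    · obtain ⟨r, hr⟩ : ∃ r, m = 3*r+1 := ⟨m/3, by omega⟩
      have h4 : (3:ℤ) ∣ jc (tri m) := by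
        rw [jc_tri]
        refine Dvd.dvd.mul_left ⟨2*(r:ℤ)+1, ?_⟩ _
        rw [hr]; push_cast; ring
      exact h4.mul_left _
    · obtain ⟨a, ha⟩ : ∃ a, m+1 = 3*a := ⟨(m+1)/3, by omega⟩
      have h1 : m*(m+1) = 3*(m*a) := by rw [ha]; ring
      have h2 := two_tri m
      have h3 : 3 ∣ tri m := by omega
      have h4 : (3:ℤ) ∣ ((tri m : ℕ) : ℤ) := Int.natCast_dvd_natCast.mpr h3
      exact h4.mul_right _
  · push_neg at h
    rw [jc_of_not_tri h, mul_zero]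
    exact dvd_zero _

/-- coefficients of (θ²J)/3 -/
noncomputable def Kser : PowerSeries ℤ := mk fun n => (n:ℤ) * (((n:ℤ) * jc n)/3)

lemma coeff_J (n : ℕ) : coeff n J = jc n := coeff_mk _ _

lemma th_th_J : th (th J) = 3 * Kser := by
  ext n
  rw [coeff_th, coeff_th, coeff_J]
  have e3 : ((3:PowerSeries ℤ)) = C 3 := by rw [eq_intCast C]; norm_num
  rw [e3, PowerSeries.coeff_C_mul,
    show (coeff n) Kser = (n:ℤ) * (((n:ℤ) * jc n)/3) from coeff_mk _ _]
  have := Int.mul_ediv_cancel' (hdvd3 n)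
  calc (n:ℤ) * ((n:ℤ) * jc n) = (n:ℤ) * (3 * (((n:ℤ) * jc n)/3)) := by rw [this]
  _ = 3 * ((n:ℤ) * (((n:ℤ) * jc n)/3)) := by ring

lemma th_intC_mul (c : ℤ) (f : PowerSeries ℤ) :
    th ((c : PowerSeries ℤ) * f) = (c : PowerSeries ℤ) * th f := by
  ext n
  rw [coeff_th, ← eq_intCast C, PowerSeries.coeff_C_mul, PowerSeries.coeff_C_mul, coeff_th]
  ring

lemma three_cancel {A B : PowerSeries ℤ} (h : (3:PowerSeries ℤ) * A = 3 * B) : A = B := by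
  ext n
  have hc := congrArg (coeff n) h
  have e : ∀ Cc : PowerSeries ℤ, coeff n ((3:PowerSeries ℤ)*Cc) = 3 * coeff n Cc := by
    intro Cc
    rw [show ((3:PowerSeries ℤ)) = C 3 by rw [eq_intCast C]; norm_num, PowerSeries.coeff_C_mul]
  rw [e, e] at hc
  exact mul_left_cancel₀ (by norm_num) hc

lemma thS_J : J * th S = 3*(S^2*J) - Kser := by
  have A1 : th J = -(3*(S*J)) := th_J
  have A2 : th (th J) = 3 * Kser := th_th_J
  have A3 : th (-(3*(S*J))) = -(3 * th (S*J)) := by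
    have e : (-(3*(S*J)) : PowerSeries ℤ) = ((-3 : ℤ) : PowerSeries ℤ) * (S*J) := by
      push_cast; ring
    rw [e, th_intC_mul]
    push_cast; ring
  have A4 : th (S*J) = S * th J + J * th S := th_mul S J
  have comb : 3 * Kser = 9*(S^2*J) - 3*(J * th S) := by
    calc (3:PowerSeries ℤ) * Kser = th (th J) := A2.symm
    _ = th (-(3*(S*J))) := by rw [A1]
    _ = -(3*th (S*J)) := A3
    _ = -(3*(S*th J + J*th S)) := by rw [A4]
    _ = _ := by rw [A1]; ring
  apply three_cancel
  linear_combination comb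

/-! ### passing to ZMod 3 -/

noncomputable def pi3 : PowerSeries ℤ →+* PowerSeries R3 :=
  PowerSeries.map (Int.castRingHom R3)

lemma coeff_pi3 (n : ℕ) (f : PowerSeries ℤ) :
    coeff n (pi3 f) = ((coeff n f : ℤ) : R3) := PowerSeries.coeff_map _ _ _

noncomputable def th3 (f : PowerSeries R3) : PowerSeries R3 := X * derivativeFun f

lemma coeff_th3 (n : ℕ) (f : PowerSeries R3) :
    coeff n (th3 f) = (n : R3) * coeff n f := by
  unfold th3
  cases n with
  | zero =>
    rw [coeff_zero_eq_constantCoeff, map_mul, constantCoeff_X, zero_mul]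
    push_cast; ring
  | succ m =>
    rw [coeff_succ_X_mul, show derivativeFun f = derivative _ f from rfl, coeff_derivative]
    push_cast; ring

lemma map_th (f : PowerSeries ℤ) : pi3 (th f) = th3 (pi3 f) := by
  ext n
  rw [coeff_pi3, coeff_th, coeff_th3, coeff_pi3]
  push_cast; ring

lemma jac3 : (pi3 P)^3 = pi3 J := by
  rw [← map_pow, jacobi]

lemma isUnit_pi3J : IsUnit (pi3 J) := by
  apply IsUnit.of_mul_eq_one _ (mul_invOfUnit (pi3 J) 1 ?_)
  have h0 : coeff 0 J = 1 := by
    have := jc_tri 0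
    rw [show tri 0 = 0 from rfl] at this
    rw [coeff_J, this]
    norm_num
  rw [← coeff_zero_eq_constantCoeff_apply, coeff_pi3, h0]
  norm_num

/-! ### triangular-number arithmetic -/

lemma tri_mul3 (r : ℕ) : tri (3*r+1) = 9 * tri r + 1 := by
  have a := two_tri (3*r+1)
  have b := two_tri r
  have c : (3*r+1)*((3*r+1)+1) = 9*(r*(r+1)) + 2 := by ring
  omega

lemma tri_div3 {m : ℕ} (h : m % 3 = 0 ∨ m % 3 = 2) : 3 ∣ tri m := by
  have a := two_tri m
  rcases h with h | h
  · obtain ⟨r, hr⟩ : ∃ r, m = 3*r := ⟨m/3, by omega⟩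
    have : m*(m+1) = 3*(r*(m+1)) := by rw [hr]; ring
    omega
  · obtain ⟨r, hr⟩ : ∃ r, m + 1 = 3*r := ⟨(m+1)/3, by omega⟩
    have : m*(m+1) = 3*(m*r) := by
      calc m*(m+1) = m*(3*r) := by rw [hr]
      _ = 3*(m*r) := by ring
    omega

lemma neg_one_pow_3r (r : ℕ) : ((-1:ℤ))^(3*r) = (-1)^r := by
  rw [pow_mul]
  norm_num

lemma key_arith (m : ℕ) :
    (if 9 ∣ m then ((jc (m/9) : ℤ) : R3) else 0)
      = -(((((m+1:ℕ)):ℤ) * (((((m+1:ℕ)):ℤ) * jc (m+1))/3) : ℤ) : R3) := by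
  by_cases h : ∃ t, tri t = m + 1
  · obtain ⟨t, ht⟩ := h
    rcases (by omega : t % 3 = 1 ∨ (t % 3 = 0 ∨ t % 3 = 2)) with hm | hm
    · -- the essential case
      obtain ⟨r, hr⟩ : ∃ r, t = 3*r+1 := ⟨t/3, by omega⟩
      subst hr
      have ht9 : 9 * tri r + 1 = m + 1 := by rw [← tri_mul3]; exact ht
      have hm9 : m = 9 * tri r := by omega
      have h9 : 9 ∣ m := ⟨tri r, hm9⟩
      have hdiv : m / 9 = tri r := by omega
      rw [if_pos h9, hdiv, jc_tri]
      have hn1 : m + 1 = tri (3*r+1) := ht.symm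
      have hq : ((m+1:ℕ):ℤ) * jc (m+1) = 3 * (((m+1:ℕ):ℤ) * ((-1)^(3*r+1) * (2*(r:ℤ)+1))) := by
        rw [hn1, jc_tri]
        push_cast
        ring
      have hq' : (((m+1:ℕ):ℤ) * jc (m+1))/3 = ((m+1:ℕ):ℤ) * ((-1)^(3*r+1) * (2*(r:ℤ)+1)) := by
        rw [hq]
        exact Int.mul_ediv_cancel_left _ (by norm_num)
      rw [hq']
      have hmT : ((m+1:ℕ):ℤ) = 9*((tri r : ℕ):ℤ)+1 := by omega
      have hp : ((-1:ℤ))^(3*r+1) = -(-1)^r := by rw [pow_succ, neg_one_pow_3r]; ring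
      rw [← Int.cast_neg, ZMod.intCast_eq_intCast_iff]
      apply Int.modEq_iff_dvd.mpr
      refine ⟨(27*((tri r : ℕ):ℤ)^2+6*((tri r : ℕ):ℤ))*(-1)^r*(2*(r:ℤ)+1), ?_⟩
      rw [hmT, hp]
      ring
    · -- 3 ∣ m+1 : both sides vanish mod 3
      have h3n : 3 ∣ (m+1) := by
        rw [← ht]
        exact tri_div3 (by omega)
      rw [if_neg (by omega : ¬ 9 ∣ m)]
      have hd : (3:ℤ) ∣ ((((m+1:ℕ)):ℤ) * (((((m+1:ℕ)):ℤ) * jc (m+1))/3)) :=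
        (Int.natCast_dvd_natCast.mpr h3n).mul_right _
      have : (((((m+1:ℕ)):ℤ) * (((((m+1:ℕ)):ℤ) * jc (m+1))/3) : ℤ) : R3) = 0 :=
        (ZMod.intCast_zmod_eq_zero_iff_dvd _ _).mpr hd
      rw [this, neg_zero]
  · -- m+1 not triangular
    push_neg at h
    have hjc0 : jc (m+1) = 0 := jc_of_not_tri h
    rw [hjc0]
    have e : ((((m+1:ℕ)):ℤ) * 0)/3 = 0 := by norm_num
    rw [mul_zero, Int.zero_ediv, mul_zero]
    rw [Int.cast_zero, neg_zero]
    by_cases h9 : 9 ∣ m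
    · rw [if_pos h9]
      have : jc (m/9) = 0 := by
        apply jc_of_not_tri
        intro r hr
        apply h (3*r+1)
        rw [tri_mul3]
        omega
      rw [this, Int.cast_zero]
    · rw [if_neg h9]


lemma coeff_Kser (n : ℕ) : coeff n Kser = (n:ℤ) * (((n:ℤ)*jc n)/3) := coeff_mk _ _

lemma coeff_S (n : ℕ) : coeff n S = ((ArithmeticFunction.sigma 1 n : ℕ) : ℤ) := coeff_mk _ _

lemma map_delta : pi3 Δ = X * (pi3 P)^24 := by
  rw [delta_eq, map_mul, map_pow]
  congr 1
  show PowerSeries.map (Int.castRingHom R3) X = X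
  simp

lemma series_final : X * ((pi3 J)^3)^3 = -(pi3 Kser) := by
  ext n
  rw [map_neg, coeff_pi3, coeff_Kser]
  cases n with
  | zero =>
    rw [coeff_zero_eq_constantCoeff, map_mul, constantCoeff_X, zero_mul]
    norm_num
  | succ m =>
    rw [coeff_succ_X_mul, ninth_coeff]
    have hk := key_arith m
    rw [coeff_pi3, coeff_J]
    push_cast at hk ⊢
    convert hk using 2

lemma main_series : pi3 Δ = th3 (pi3 S) := by
  have H1 : pi3 Δ * pi3 J = X * ((pi3 J)^3)^3 := by
    rw [map_delta, ← jac3]; ring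
  have H3 : th3 (pi3 S) * pi3 J = -(pi3 Kser) := by
    have h := congrArg pi3 thS_J
    rw [map_mul, map_sub, map_mul, map_th] at h
    have h3' : pi3 ((3:PowerSeries ℤ)) = (3 : PowerSeries R3) := map_ofNat pi3 3
    rw [h3', three_eq_zero, zero_mul, zero_sub] at h
    linear_combination h
  have : pi3 Δ * pi3 J = th3 (pi3 S) * pi3 J := by
    rw [H1, H3]
    exact series_final
  exact isUnit_pi3J.mul_right_cancel this

end Ram3

theorem ramanujan_congruence_mod_three (n : ℕ) (hn : 0 < n) (h3 : ¬ (3 ∣ n)) :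
    (n : ℤ) * ramanujanTau n ≡ (ArithmeticFunction.sigma 1 n : ℤ) [ZMOD 3] := by
  have hser := Ram3.main_series
  have hco := congrArg (PowerSeries.coeff n) hser
  rw [Ram3.coeff_pi3, Ram3.coeff_th3, Ram3.coeff_pi3, Ram3.coeff_S] at hco
  have hne : ((n:ℕ) : Ram3.R3) ≠ 0 := by
    rw [Ne, ZMod.natCast_eq_zero_iff]
    exact h3
  have hsq : ∀ x : Ram3.R3, x ≠ 0 → x * x = 1 := by decide
  have hτ : ((ramanujanTau n : ℤ) : Ram3.R3) = (n : Ram3.R3) * ((ArithmeticFunction.sigma 1 n : ℕ) : Ram3.R3) := by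
    rw [ramanujanTau]
    rw [hco]
    push_cast
    ring
  have hfinal : (((n:ℤ) * ramanujanTau n : ℤ) : Ram3.R3)
      = (((ArithmeticFunction.sigma 1 n : ℕ) : ℤ) : Ram3.R3) := by
    push_cast
    rw [hτ, ← mul_assoc, hsq _ hne, one_mul]
  have key := (ZMod.intCast_eq_intCast_iff _ _ _).mp hfinal
  simpa using key
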